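/- In a double category, let g : B → D be a vertical morphism whose companion g* exists. Then any opcartesian cell φ : J ⇒ K with identity vertical source and vertical target g (defining K as the extension of J : A ⇸ B along g on the right) is both initial and pointwise initial: for any cell ε : K ⇒ 1_M with vertical sides r and d, ε defines r as the (pointwise) right Kan extension of d along K if and only if ε ∘ φ defines r as the (pointwise) right Kan extension of d ∘ g along J. -/

import Mathlib

universe u v w x

/-- A (strict) double category: objects, vertical morphisms, horizontal morphisms
and square-shaped cells, with strictly associative vertical composition of cells and
(strictified) horizontal composition. -/
structure DoubleCat where
  Obj : Type u
  Ver : Obj → Obj → Type v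
  vid : ∀ A, Ver A A
  vcomp : ∀ {A B C}, Ver A B → Ver B C → Ver A C
  vid_vcomp : ∀ {A B} (f : Ver A B), vcomp (vid A) f = f
  vcomp_vid : ∀ {A B} (f : Ver A B), vcomp f (vid B) = f
  vassoc : ∀ {A B C D} (f : Ver A B) (g : Ver B C) (h : Ver C D),
    vcomp (vcomp f g) h = vcomp f (vcomp g h)
  Hor : Obj → Obj → Type w
  hid : ∀ A, Hor A A
  hcomp : ∀ {A B C}, Hor A B → Hor B C → Hor A C
  hid_hcomp : ∀ {A B} (J : Hor A B), hcomp (hid A) J = J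
  hcomp_hid : ∀ {A B} (J : Hor A B), hcomp J (hid B) = J
  hassoc : ∀ {A B C D} (J : Hor A B) (H : Hor B C) (K : Hor C D),
    hcomp (hcomp J H) K = hcomp J (hcomp H K)
  Cell : ∀ {A B C D}, Hor A B → Ver A C → Ver B D → Hor C D → Type x
  cid : ∀ {A B} (J : Hor A B), Cell J (vid A) (vid B) J
  cidV : ∀ {A C} (f : Ver A C), Cell (hid A) f f (hid C)
  vcompCell : ∀ {A B C D E F : Obj} {J : Hor A B} {K : Hor C D} {L : Hor E F}
    {f : Ver A C} {g : Ver B D} {h : Ver C E} {k : Ver D F},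
    Cell J f g K → Cell K h k L → Cell J (vcomp f h) (vcomp g k) L
  hcompCell : ∀ {A B C A' B' C' : Obj} {J : Hor A B} {H : Hor B C}
    {K : Hor A' B'} {L : Hor B' C'} {f : Ver A A'} {g : Ver B B'} {h : Ver C C'},
    Cell J f g K → Cell H g h L → Cell (hcomp J H) f h (hcomp K L)
  cid_vcompCell : ∀ {A B C D} {J : Hor A B} {K : Hor C D} {f : Ver A C} {g : Ver B D}
    (α : Cell J f g K), HEq (vcompCell (cid J) α) α
  vcompCell_cid : ∀ {A B C D} {J : Hor A B} {K : Hor C D} {f : Ver A C} {g : Ver B D}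
    (α : Cell J f g K), HEq (vcompCell α (cid K)) α
  vcompCell_assoc : ∀ {A B C D E F G H' : Obj} {J : Hor A B} {K : Hor C D} {L : Hor E F}
    {N : Hor G H'} {f1 : Ver A C} {g1 : Ver B D} {f2 : Ver C E} {g2 : Ver D F}
    {f3 : Ver E G} {g3 : Ver F H'}
    (α : Cell J f1 g1 K) (β : Cell K f2 g2 L) (γ : Cell L f3 g3 N),
    HEq (vcompCell (vcompCell α β) γ) (vcompCell α (vcompCell β γ))
  interchange : ∀ {A B C A' B' C' A'' B'' C'' : Obj}
    {J : Hor A B} {H : Hor B C} {K : Hor A' B'} {L : Hor B' C'}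
    {K' : Hor A'' B''} {L' : Hor B'' C''}
    {f : Ver A A'} {g : Ver B B'} {h : Ver C C'}
    {f' : Ver A' A''} {g' : Ver B' B''} {h' : Ver C' C''}
    (φ : Cell J f g K) (χ : Cell H g h L) (ψ : Cell K f' g' K') (ξ : Cell L g' h' L'),
    vcompCell (hcompCell φ χ) (hcompCell ψ ξ) = hcompCell (vcompCell φ ψ) (vcompCell χ ξ)
  cid_hcomp : ∀ {A B C} (J : Hor A B) (H : Hor B C),
    cid (hcomp J H) = hcompCell (cid J) (cid H)
  cidV_vid : ∀ A, cidV (vid A) = cid (hid A)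
  cidV_vcomp : ∀ {A B C} (f : Ver A B) (g : Ver B C),
    cidV (vcomp f g) = vcompCell (cidV f) (cidV g)
  hcompCell_assoc : ∀ {A B C D A' B' C' D' : Obj}
    {J : Hor A B} {H : Hor B C} {G : Hor C D}
    {J' : Hor A' B'} {H' : Hor B' C'} {G' : Hor C' D'}
    {f : Ver A A'} {g : Ver B B'} {h : Ver C C'} {k : Ver D D'}
    (α : Cell J f g J') (β : Cell H g h H') (γ : Cell G h k G'),
    HEq (hcompCell (hcompCell α β) γ) (hcompCell α (hcompCell β γ))
  cidV_hcompCell : ∀ {A B A' B'} {J : Hor A B} {J' : Hor A' B'}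
    {f : Ver A A'} {g : Ver B B'} (α : Cell J f g J'),
    HEq (hcompCell (cidV f) α) α
  hcompCell_cidV : ∀ {A B A' B'} {J : Hor A B} {J' : Hor A' B'}
    {f : Ver A A'} {g : Ver B B'} (α : Cell J f g J'),
    HEq (hcompCell α (cidV g)) α

namespace DoubleCat

variable (D : DoubleCat)

/-- A cell is cartesian if every cell with the same horizontal target and vertical
sides factoring through its vertical sides factors uniquely through it. -/
def IsCartesian {A B C E : D.Obj} {J : D.Hor A B} {K : D.Hor C E}
    {f : D.Ver A C} {g : D.Ver B E} (φ : D.Cell J f g K) : Prop :=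
  ∀ {X Y : D.Obj} (H : D.Hor X Y) (h : D.Ver X A) (k : D.Ver Y B)
    (ψ : D.Cell H (D.vcomp h f) (D.vcomp k g) K),
    ∃! ψ' : D.Cell H h k J, ψ = D.vcompCell ψ' φ

/-- A cell is opcartesian if every cell with the same horizontal source and vertical
sides factoring through its vertical sides factors uniquely through it. -/
def IsOpcartesian {A B C E : D.Obj} {J : D.Hor A B} {K : D.Hor C E}
    {f : D.Ver A C} {g : D.Ver B E} (φ : D.Cell J f g K) : Prop :=
  ∀ {X Y : D.Obj} (L : D.Hor X Y) (h : D.Ver C X) (k : D.Ver E Y)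
    (χ : D.Cell J (D.vcomp f h) (D.vcomp g k) L),
    ∃! χ' : D.Cell K h k L, χ = D.vcompCell φ χ'

/-- `(ε, η)` exhibits `fs` as the companion of the vertical morphism `f`. -/
def IsCompanion {A C : D.Obj} (f : D.Ver A C) (fs : D.Hor A C)
    (ε : D.Cell fs f (D.vid C) (D.hid C)) (η : D.Cell (D.hid A) (D.vid A) f fs) : Prop :=
  HEq (D.vcompCell η ε) (D.cidV f) ∧ HEq (D.hcompCell η ε) (D.cid fs)

/-- `(ε, η)` exhibits `gs` as the conjoint of the vertical morphism `g`. -/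
def IsConjoint {B E : D.Obj} (g : D.Ver B E) (gs : D.Hor E B)
    (ε : D.Cell gs (D.vid E) g (D.hid E)) (η : D.Cell (D.hid B) g (D.vid B) gs) : Prop :=
  HEq (D.vcompCell η ε) (D.cidV g) ∧ HEq (D.hcompCell ε η) (D.cid gs)

/-- A vertical morphism is invertible. -/
def VInvertible {A C : D.Obj} (f : D.Ver A C) : Prop :=
  ∃ f' : D.Ver C A, D.vcomp f f' = D.vid A ∧ D.vcomp f' f = D.vid C

/-- A cell has a vertical inverse. -/
def HasVerticalInverse {A B C E : D.Obj} {J : D.Hor A B} {K : D.Hor C E}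
    {f : D.Ver A C} {g : D.Ver B E} (φ : D.Cell J f g K) : Prop :=
  ∃ (f' : D.Ver C A) (g' : D.Ver E B) (ψ : D.Cell K f' g' J),
    D.vcomp f f' = D.vid A ∧ D.vcomp f' f = D.vid C ∧
    D.vcomp g g' = D.vid B ∧ D.vcomp g' g = D.vid E ∧
    HEq (D.vcompCell φ ψ) (D.cid J) ∧ HEq (D.vcompCell ψ φ) (D.cid K)

/-- `ε : J ⇒ 1_M` defines `r` as the right Kan extension of `d` along `J`. -/
def IsRan {A B M : D.Obj} {J : D.Hor A B} {r : D.Ver A M} {d : D.Ver B M}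
    (ε : D.Cell J r d (D.hid M)) : Prop :=
  ∀ (s : D.Ver A M) (φ : D.Cell J s d (D.hid M)),
    ∃! φ' : D.Cell (D.hid A) s r (D.hid M), HEq φ (D.hcompCell φ' ε)

/-- `ε : J ⇒ 1_M` defines `r` as the pointwise right Kan extension of `d` along `J`. -/
def IsPointwiseRan {A B M : D.Obj} {J : D.Hor A B} {r : D.Ver A M} {d : D.Ver B M}
    (ε : D.Cell J r d (D.hid M)) : Prop :=
  ∀ {C : D.Obj} (H : D.Hor C A) (s : D.Ver C M) (φ : D.Cell (D.hcomp H J) s d (D.hid M)),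
    ∃! φ' : D.Cell H s r (D.hid M), HEq φ (D.hcompCell φ' ε)

/-- The vertical cell `ε : r ∘ j ⇒ d` defines `r` as the right Kan extension of `d`
along `j` in the vertical 2-category `V(K)`. -/
def IsRan2 {A B M : D.Obj} (j : D.Ver A B) (r : D.Ver B M) (d : D.Ver A M)
    (ε : D.Cell (D.hid A) (D.vcomp j r) d (D.hid M)) : Prop :=
  ∀ (s : D.Ver B M) (ψ : D.Cell (D.hid A) (D.vcomp j s) d (D.hid M)),
    ∃! ψ' : D.Cell (D.hid B) s r (D.hid M),
      HEq ψ (D.hcompCell (D.vcompCell (D.cidV j) ψ') ε)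

/-- `π : 1_T ⇒ J` is a tabulation of `J`: it satisfies the 1- and 2-dimensional
universal properties. -/
def IsTabulation {T A B : D.Obj} {pA : D.Ver T A} {pB : D.Ver T B} {J : D.Hor A B}
    (π : D.Cell (D.hid T) pA pB J) : Prop :=
  (∀ {X : D.Obj} (φA : D.Ver X A) (φB : D.Ver X B) (φ : D.Cell (D.hid X) φA φB J),
    ∃! φ' : D.Ver X T, D.vcomp φ' pA = φA ∧ D.vcomp φ' pB = φB ∧
      HEq (D.vcompCell (D.cidV φ') π) φ) ∧
  (∀ {X Y : D.Obj} (H : D.Hor X Y)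
    (φA : D.Ver X A) (φB : D.Ver X B) (φ : D.Cell (D.hid X) φA φB J)
    (ψA : D.Ver Y A) (ψB : D.Ver Y B) (ψ : D.Cell (D.hid Y) ψA ψB J)
    (φ' : D.Ver X T) (ψ' : D.Ver Y T),
    (D.vcomp φ' pA = φA ∧ D.vcomp φ' pB = φB ∧ HEq (D.vcompCell (D.cidV φ') π) φ) →
    (D.vcomp ψ' pA = ψA ∧ D.vcomp ψ' pB = ψB ∧ HEq (D.vcompCell (D.cidV ψ') π) ψ) →
    ∀ (ξA : D.Cell H φA ψA (D.hid A)) (ξB : D.Cell H φB ψB (D.hid B)),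
      HEq (D.hcompCell ξA ψ) (D.hcompCell φ ξB) →
      ∃! ξ' : D.Cell H φ' ψ' (D.hid T),
        HEq (D.vcompCell ξ' (D.cidV pA)) ξA ∧ HEq (D.vcompCell ξ' (D.cidV pB)) ξB)

end DoubleCat

namespace DoubleCatAux

open DoubleCat

variable {D : DoubleCat}

/-- Cast a cell along equalities of its four boundary morphisms. -/
def castC {A B C E : D.Obj} {J J' : D.Hor A B} {f f' : D.Ver A C} {g g' : D.Ver B E}
    {K K' : D.Hor C E} (eJ : J = J') (ef : f = f') (eg : g = g') (eK : K = K')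
    (α : D.Cell J f g K) : D.Cell J' f' g' K' := by
  subst eJ; subst ef; subst eg; subst eK; exact α

theorem castC_heq {A B C E : D.Obj} {J J' : D.Hor A B} {f f' : D.Ver A C} {g g' : D.Ver B E}
    {K K' : D.Hor C E} (eJ : J = J') (ef : f = f') (eg : g = g') (eK : K = K')
    (α : D.Cell J f g K) : HEq (castC eJ ef eg eK α) α := by
  subst eJ; subst ef; subst eg; subst eK; rfl

/-- Congruence for vertical composition of cells. -/
theorem vcc {A1 A2 A3 A4 A5 A6 : D.Obj} {J J' : D.Hor A1 A2} {K K' : D.Hor A3 A4}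
    {L L' : D.Hor A5 A6}
    {f f' : D.Ver A1 A3} {g g' : D.Ver A2 A4} {h h' : D.Ver A3 A5} {k k' : D.Ver A4 A6}
    (eJ : J = J') (eK : K = K') (eL : L = L') (ef : f = f') (eg : g = g')
    (eh : h = h') (ek : k = k')
    {α : D.Cell J f g K} {α' : D.Cell J' f' g' K'}
    {β : D.Cell K h k L} {β' : D.Cell K' h' k' L'}
    (hα : HEq α α') (hβ : HEq β β') :
    HEq (D.vcompCell α β) (D.vcompCell α' β') := by
  subst eJ; subst eK; subst eL; subst ef; subst eg; subst eh; subst ek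
  rw [eq_of_heq hα, eq_of_heq hβ]

/-- Congruence for horizontal composition of cells. -/
theorem hcc {A1 A2 A3 A4 A5 A6 : D.Obj} {J J' : D.Hor A1 A2} {H H' : D.Hor A2 A3}
    {K K' : D.Hor A4 A5} {L L' : D.Hor A5 A6}
    {f f' : D.Ver A1 A4} {g g' : D.Ver A2 A5} {h h' : D.Ver A3 A6}
    (eJ : J = J') (eH : H = H') (eK : K = K') (eL : L = L')
    (ef : f = f') (eg : g = g') (eh : h = h')
    {α : D.Cell J f g K} {α' : D.Cell J' f' g' K'}
    {β : D.Cell H g h L} {β' : D.Cell H' g' h' L'}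
    (hα : HEq α α') (hβ : HEq β β') :
    HEq (D.hcompCell α β) (D.hcompCell α' β') := by
  subst eJ; subst eH; subst eK; subst eL; subst ef; subst eg; subst eh
  rw [eq_of_heq hα, eq_of_heq hβ]

section Companion

variable {B Dd : D.Obj} {g : D.Ver B Dd} {gs : D.Hor B Dd}
  (eps : D.Cell gs g (D.vid Dd) (D.hid Dd)) (eta : D.Cell (D.hid B) (D.vid B) g gs)

/-- The canonical cell `J' ⇒ J' ⊙ g*` obtained by whiskering the companion unit. -/
def kap {C : D.Obj} (J' : D.Hor C B) : D.Cell J' (D.vid C) g (D.hcomp J' gs) :=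
  castC (D.hcomp_hid J') rfl rfl rfl (D.hcompCell (D.cid J') eta)

theorem kap_heq {C : D.Obj} (J' : D.Hor C B) :
    HEq (kap eta J') (D.hcompCell (D.cid J') eta) :=
  castC_heq _ _ _ _ _

/-- The canonical cell `kap` is opcartesian. -/
theorem opk (h1 : HEq (D.vcompCell eta eps) (D.cidV g))
    (h2 : HEq (D.hcompCell eta eps) (D.cid gs))
    {C : D.Obj} (J' : D.Hor C B) :
    D.IsOpcartesian (kap eta J') := by
  intro X Y L h k χ
  -- χ : D.Cell J' (D.vcomp (D.vid C) h) (D.vcomp g k) L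
  set ξ : D.Cell gs (D.vcomp g k) (D.vcomp (D.vid Dd) k) (D.hid Y) :=
    D.vcompCell eps (D.cidV k) with hξ
  refine ⟨castC rfl (D.vid_vcomp h) (D.vid_vcomp k) (D.hcomp_hid L) (D.hcompCell χ ξ),
    ?_, ?_⟩
  · -- existence
    refine (eq_of_heq ?_)
    have c1 : HEq (D.vcompCell (kap eta J')
        (castC rfl (D.vid_vcomp h) (D.vid_vcomp k) (D.hcomp_hid L) (D.hcompCell χ ξ)))
        (D.vcompCell (D.hcompCell (D.cid J') eta) (D.hcompCell χ ξ)) := by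
      refine vcc (D.hcomp_hid J').symm rfl (D.hcomp_hid L).symm rfl rfl
        (D.vid_vcomp h).symm (D.vid_vcomp k).symm (kap_heq eta J')
        (castC_heq rfl (D.vid_vcomp h) (D.vid_vcomp k) (D.hcomp_hid L) (D.hcompCell χ ξ))
    have c2 : D.vcompCell (D.hcompCell (D.cid J') eta) (D.hcompCell χ ξ)
        = D.hcompCell (D.vcompCell (D.cid J') χ) (D.vcompCell eta ξ) :=
      D.interchange (D.cid J') eta χ ξ
    have c3a : HEq (D.vcompCell (D.cid J') χ) χ := D.cid_vcompCell χ
    have c3b : HEq (D.vcompCell eta ξ) (D.cidV (D.vcomp g k)) := by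
      have s1 : HEq (D.vcompCell eta (D.vcompCell eps (D.cidV k)))
          (D.vcompCell (D.vcompCell eta eps) (D.cidV k)) :=
        (D.vcompCell_assoc eta eps (D.cidV k)).symm
      have s2 : HEq (D.vcompCell (D.vcompCell eta eps) (D.cidV k))
          (D.vcompCell (D.cidV g) (D.cidV k)) := by
        refine vcc rfl rfl rfl (D.vid_vcomp g) (D.vcomp_vid g) rfl rfl h1 HEq.rfl
      have s3 : D.vcompCell (D.cidV g) (D.cidV k) = D.cidV (D.vcomp g k) :=
        (D.cidV_vcomp g k).symm
      exact (s1.trans s2).trans (heq_of_eq s3)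
    have c3 : HEq (D.hcompCell (D.vcompCell (D.cid J') χ) (D.vcompCell eta ξ))
        (D.hcompCell χ (D.cidV (D.vcomp g k))) := by
      refine hcc rfl rfl rfl rfl ?_ ?_ ?_ c3a c3b
      · rw [D.vid_vcomp, D.vid_vcomp]
      · rw [D.vid_vcomp]
      · rw [D.vid_vcomp]
    have c4 : HEq (D.hcompCell χ (D.cidV (D.vcomp g k))) χ := D.hcompCell_cidV χ
    exact (((c1.trans (heq_of_eq c2)).trans c3).trans c4).symm
  · -- uniqueness
    intro χ'' hfac
    refine eq_of_heq ?_
    -- cid (hcomp J' gs) ≈ ((cid J') ⊙ eta) ⊙ eps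
    have u1 : HEq (D.cid (D.hcomp J' gs))
        (D.hcompCell (D.hcompCell (D.cid J') eta) eps) := by
      have a1 : D.cid (D.hcomp J' gs) = D.hcompCell (D.cid J') (D.cid gs) :=
        D.cid_hcomp J' gs
      have a2 : HEq (D.hcompCell (D.cid J') (D.cid gs))
          (D.hcompCell (D.cid J') (D.hcompCell eta eps)) := by
        refine hcc rfl (D.hid_hcomp gs).symm rfl (D.hcomp_hid gs).symm rfl rfl rfl
          HEq.rfl h2.symm
      have a3 : HEq (D.hcompCell (D.cid J') (D.hcompCell eta eps))
          (D.hcompCell (D.hcompCell (D.cid J') eta) eps) :=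
        (D.hcompCell_assoc (D.cid J') eta eps).symm
      exact (heq_of_eq a1).trans (a2.trans a3)
    have u5 : HEq (D.hcompCell χ'' (D.cidV k)) χ'' := D.hcompCell_cidV χ''
    have u6 : HEq χ''
        (D.vcompCell (D.hcompCell (D.hcompCell (D.cid J') eta) eps)
          (D.hcompCell χ'' (D.cidV k))) := by
      have b1 : HEq χ'' (D.vcompCell (D.cid (D.hcomp J' gs)) χ'') :=
        (D.cid_vcompCell χ'').symm
      have b2 : HEq (D.vcompCell (D.cid (D.hcomp J' gs)) χ'')
          (D.vcompCell (D.hcompCell (D.hcompCell (D.cid J') eta) eps)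
            (D.hcompCell χ'' (D.cidV k))) := by
        refine vcc ?_ ?_ ?_ rfl rfl rfl rfl u1 u5.symm
        · rw [D.hcomp_hid]
        · rw [D.hcomp_hid]
        · rw [D.hcomp_hid]
      exact b1.trans b2
    have u7 : D.vcompCell (D.hcompCell (D.hcompCell (D.cid J') eta) eps)
          (D.hcompCell χ'' (D.cidV k))
        = D.hcompCell (D.vcompCell (D.hcompCell (D.cid J') eta) χ'')
          (D.vcompCell eps (D.cidV k)) :=
      D.interchange (D.hcompCell (D.cid J') eta) eps χ'' (D.cidV k)
    have u8 : HEq (D.vcompCell (D.hcompCell (D.cid J') eta) χ'') χ := by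
      have : HEq (D.vcompCell (D.hcompCell (D.cid J') eta) χ'')
          (D.vcompCell (kap eta J') χ'') := by
        refine vcc (D.hcomp_hid J') rfl rfl rfl rfl rfl rfl (kap_heq eta J').symm HEq.rfl
      exact this.trans (heq_of_eq hfac.symm)
    have u9 : HEq (D.hcompCell (D.vcompCell (D.hcompCell (D.cid J') eta) χ'')
          (D.vcompCell eps (D.cidV k)))
        (D.hcompCell χ ξ) := by
      refine hcc (D.hcomp_hid J') rfl rfl rfl ?_ rfl rfl u8 HEq.rfl
      · rw [D.vid_vcomp]
    have u10 : HEq (D.hcompCell χ ξ)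
        (castC rfl (D.vid_vcomp h) (D.vid_vcomp k) (D.hcomp_hid L) (D.hcompCell χ ξ)) :=
      (castC_heq rfl (D.vid_vcomp h) (D.vid_vcomp k) (D.hcomp_hid L) (D.hcompCell χ ξ)).symm
    exact ((u6.trans (heq_of_eq u7)).trans u9).trans u10




section Whisker

variable {A : D.Obj} {J : D.Hor A B} {K : D.Hor A Dd}
  (φ : D.Cell J (D.vid A) g K)
  (θ₂ : D.Cell K (D.vid A) (D.vid Dd) (D.hcomp J gs))
  (θ₁ : D.Cell (D.hcomp J gs) (D.vid A) (D.vid Dd) K)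

theorem kapHJ_heq {C : D.Obj} (H : D.Hor C A) :
    HEq (kap eta (D.hcomp H J)) (D.hcompCell (D.cid H) (kap eta J)) := by
  have a1 : HEq (kap eta (D.hcomp H J)) (D.hcompCell (D.cid (D.hcomp H J)) eta) :=
    kap_heq eta (D.hcomp H J)
  have a2 : HEq (D.hcompCell (D.cid (D.hcomp H J)) eta)
      (D.hcompCell (D.hcompCell (D.cid H) (D.cid J)) eta) := by
    rw [← D.cid_hcomp]
  have a3 : HEq (D.hcompCell (D.hcompCell (D.cid H) (D.cid J)) eta)
      (D.hcompCell (D.cid H) (D.hcompCell (D.cid J) eta)) :=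
    D.hcompCell_assoc (D.cid H) (D.cid J) eta
  have a4 : HEq (D.hcompCell (D.cid H) (D.hcompCell (D.cid J) eta))
      (D.hcompCell (D.cid H) (kap eta J)) := by
    refine hcc rfl (D.hcomp_hid J) rfl rfl rfl rfl rfl HEq.rfl (kap_heq eta J).symm
  exact ((a1.trans a2).trans a3).trans a4

theorem opPhi (h1 : HEq (D.vcompCell eta eps) (D.cidV g))
    (h2 : HEq (D.hcompCell eta eps) (D.cid gs))
    (hθ₂ : HEq (kap eta J) (D.vcompCell φ θ₂))
    (hθ₁ : HEq φ (D.vcompCell (kap eta J) θ₁))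
    (hE : HEq (D.vcompCell θ₂ θ₁) (D.cid K))
    {C : D.Obj} (H : D.Hor C A) :
    D.IsOpcartesian (D.hcompCell (D.cid H) φ) := by
  intro X Y L h k χ
  obtain ⟨χ'', hχ'', uχ''⟩ := opk eps eta h1 h2 (D.hcomp H J) L h k χ
  set χ''c : D.Cell (D.hcomp H (D.hcomp J gs)) h k L :=
    castC (D.hassoc H J gs) rfl rfl rfl χ'' with hχ''c
  refine ⟨castC rfl (D.vid_vcomp h) (D.vid_vcomp k) rfl
      (D.vcompCell (D.hcompCell (D.cid H) θ₂) χ''c), ?_, ?_⟩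
  · refine (eq_of_heq ?_).symm
    have e1 : HEq (D.vcompCell (D.hcompCell (D.cid H) φ)
          (castC rfl (D.vid_vcomp h) (D.vid_vcomp k) rfl
            (D.vcompCell (D.hcompCell (D.cid H) θ₂) χ''c)))
        (D.vcompCell (D.hcompCell (D.cid H) φ)
          (D.vcompCell (D.hcompCell (D.cid H) θ₂) χ''c)) := by
      refine vcc rfl rfl rfl rfl rfl (D.vid_vcomp h).symm (D.vid_vcomp k).symm HEq.rfl
        (castC_heq _ _ _ _ _)
    have e2 : HEq (D.vcompCell (D.hcompCell (D.cid H) φ)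
          (D.vcompCell (D.hcompCell (D.cid H) θ₂) χ''c))
        (D.vcompCell (D.vcompCell (D.hcompCell (D.cid H) φ)
          (D.hcompCell (D.cid H) θ₂)) χ''c) :=
      (D.vcompCell_assoc (D.hcompCell (D.cid H) φ) (D.hcompCell (D.cid H) θ₂) χ''c).symm
    have e3 : D.vcompCell (D.hcompCell (D.cid H) φ) (D.hcompCell (D.cid H) θ₂)
        = D.hcompCell (D.vcompCell (D.cid H) (D.cid H)) (D.vcompCell φ θ₂) :=
      D.interchange (D.cid H) φ (D.cid H) θ₂
    have e4 : HEq (D.hcompCell (D.vcompCell (D.cid H) (D.cid H)) (D.vcompCell φ θ₂))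
        (D.hcompCell (D.cid H) (kap eta J)) := by
      refine hcc rfl rfl rfl rfl ?_ ?_ ?_ (D.cid_vcompCell (D.cid H)) hθ₂.symm
      · rw [D.vid_vcomp]
      · rw [D.vid_vcomp]
      · rw [D.vcomp_vid]
    have e5 : HEq (D.vcompCell (D.vcompCell (D.hcompCell (D.cid H) φ)
          (D.hcompCell (D.cid H) θ₂)) χ''c)
        (D.vcompCell (kap eta (D.hcomp H J)) χ'') := by
      refine vcc rfl (D.hassoc H J gs).symm rfl ?_ ?_ rfl rfl
        (((heq_of_eq e3).trans e4).trans (kapHJ_heq eta H).symm)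
        (castC_heq _ _ _ _ _)
      · rw [D.vid_vcomp]
      · rw [D.vcomp_vid]
    exact ((e1.trans e2).trans e5).trans (heq_of_eq hχ''.symm)
  · intro χ₂' hfac2
    set ξ₂ : D.Cell (D.hcomp (D.hcomp H J) gs) h k L :=
      castC (D.hassoc H J gs).symm (D.vid_vcomp h) (D.vid_vcomp k) rfl
        (D.vcompCell (D.hcompCell (D.cid H) θ₁) χ₂') with hξ₂
    have v2 : D.vcompCell (D.hcompCell (D.cid H) (kap eta J)) (D.hcompCell (D.cid H) θ₁)
        = D.hcompCell (D.vcompCell (D.cid H) (D.cid H)) (D.vcompCell (kap eta J) θ₁) :=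
      D.interchange (D.cid H) (kap eta J) (D.cid H) θ₁
    have v3 : HEq (D.hcompCell (D.vcompCell (D.cid H) (D.cid H))
          (D.vcompCell (kap eta J) θ₁))
        (D.hcompCell (D.cid H) φ) := by
      refine hcc rfl rfl rfl rfl ?_ ?_ ?_ (D.cid_vcompCell (D.cid H)) hθ₁.symm
      · rw [D.vid_vcomp]
      · rw [D.vid_vcomp]
      · rw [D.vcomp_vid]
    have hclaim : χ = D.vcompCell (kap eta (D.hcomp H J)) ξ₂ := by
      refine (eq_of_heq ?_).symm
      have v0 : HEq (D.vcompCell (kap eta (D.hcomp H J)) ξ₂)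
          (D.vcompCell (D.hcompCell (D.cid H) (kap eta J))
            (D.vcompCell (D.hcompCell (D.cid H) θ₁) χ₂')) := by
        refine vcc rfl (D.hassoc H J gs) rfl rfl rfl (D.vid_vcomp h).symm
          (D.vid_vcomp k).symm (kapHJ_heq eta H) (castC_heq _ _ _ _ _)
      have v1 : HEq (D.vcompCell (D.hcompCell (D.cid H) (kap eta J))
            (D.vcompCell (D.hcompCell (D.cid H) θ₁) χ₂'))
          (D.vcompCell (D.vcompCell (D.hcompCell (D.cid H) (kap eta J))
            (D.hcompCell (D.cid H) θ₁)) χ₂') :=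
        (D.vcompCell_assoc _ _ _).symm
      have v4 : HEq (D.vcompCell (D.vcompCell (D.hcompCell (D.cid H) (kap eta J))
            (D.hcompCell (D.cid H) θ₁)) χ₂')
          (D.vcompCell (D.hcompCell (D.cid H) φ) χ₂') := by
        refine vcc rfl rfl rfl ?_ ?_ rfl rfl ((heq_of_eq v2).trans v3) HEq.rfl
        · rw [D.vid_vcomp]
        · rw [D.vcomp_vid]
      exact ((v0.trans v1).trans v4).trans (heq_of_eq hfac2.symm)
    have hξχ : ξ₂ = χ'' := uχ'' ξ₂ hclaim
    refine eq_of_heq ?_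
    have w1 : HEq χ''c (D.vcompCell (D.hcompCell (D.cid H) θ₁) χ₂') := by
      refine (castC_heq _ _ _ _ _).trans
        ((heq_of_eq hξχ.symm).trans (castC_heq _ _ _ _ _))
    have w2 : HEq (castC rfl (D.vid_vcomp h) (D.vid_vcomp k) rfl
          (D.vcompCell (D.hcompCell (D.cid H) θ₂) χ''c))
        (D.vcompCell (D.hcompCell (D.cid H) θ₂)
          (D.vcompCell (D.hcompCell (D.cid H) θ₁) χ₂')) := by
      refine (castC_heq _ _ _ _ _).trans ?_
      refine vcc rfl rfl rfl rfl rfl (D.vid_vcomp h).symm (D.vid_vcomp k).symm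
        HEq.rfl w1
    have w3 : HEq (D.vcompCell (D.hcompCell (D.cid H) θ₂)
          (D.vcompCell (D.hcompCell (D.cid H) θ₁) χ₂'))
        (D.vcompCell (D.vcompCell (D.hcompCell (D.cid H) θ₂)
          (D.hcompCell (D.cid H) θ₁)) χ₂') :=
      (D.vcompCell_assoc _ _ _).symm
    have w4 : D.vcompCell (D.hcompCell (D.cid H) θ₂) (D.hcompCell (D.cid H) θ₁)
        = D.hcompCell (D.vcompCell (D.cid H) (D.cid H)) (D.vcompCell θ₂ θ₁) :=
      D.interchange (D.cid H) θ₂ (D.cid H) θ₁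
    have w5 : HEq (D.hcompCell (D.vcompCell (D.cid H) (D.cid H)) (D.vcompCell θ₂ θ₁))
        (D.cid (D.hcomp H K)) := by
      have : HEq (D.hcompCell (D.vcompCell (D.cid H) (D.cid H)) (D.vcompCell θ₂ θ₁))
          (D.hcompCell (D.cid H) (D.cid K)) := by
        refine hcc rfl rfl rfl rfl ?_ ?_ ?_ (D.cid_vcompCell (D.cid H)) hE
        · rw [D.vid_vcomp]
        · rw [D.vid_vcomp]
        · rw [D.vid_vcomp]
      exact this.trans (heq_of_eq (D.cid_hcomp H K).symm)
    have w6 : HEq (D.vcompCell (D.vcompCell (D.hcompCell (D.cid H) θ₂)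
          (D.hcompCell (D.cid H) θ₁)) χ₂')
        (D.vcompCell (D.cid (D.hcomp H K)) χ₂') := by
      refine vcc rfl rfl rfl ?_ ?_ rfl rfl ((heq_of_eq w4).trans w5) HEq.rfl
      · rw [D.vid_vcomp]
      · rw [D.vid_vcomp]
    exact (((w2.trans w3).trans w6).trans (D.cid_vcompCell χ₂')).symm

end Whisker
end Companion
end DoubleCatAux


/-- An opcartesian cell with identity vertical source, along a vertical morphism `g`
whose companion exists, is both initial and pointwise initial. -/
theorem stmt12 (D : DoubleCat) {A B Dd : D.Obj} (g : D.Ver B Dd)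
    (hg : ∃ gs eps eta, D.IsCompanion g gs eps eta)
    {J : D.Hor A B} {K : D.Hor A Dd}
    (φ : D.Cell J (D.vid A) g K) (hφ : D.IsOpcartesian φ)
    {M : D.Obj} {r : D.Ver A M} {d : D.Ver Dd M} (ε : D.Cell K r d (D.hid M)) :
    (D.IsRan ε ↔ D.IsRan (D.vcompCell φ ε)) ∧
    (D.IsPointwiseRan ε ↔ D.IsPointwiseRan (D.vcompCell φ ε)) := by
  classical
  open DoubleCatAux in
  obtain ⟨gs, eps, eta, hc1, hc2⟩ := hg
  -- θ₂ : K ⇒ J ⊙ g*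
  obtain ⟨θ₂, hθ₂e, uθ₂⟩ := hφ (D.hcomp J gs) (D.vid A) (D.vid Dd)
    (castC rfl (D.vid_vcomp (D.vid A)).symm (D.vcomp_vid g).symm rfl (kap eta J))
  have hθ₂ : HEq (kap eta J) (D.vcompCell φ θ₂) :=
    (castC_heq rfl (D.vid_vcomp (D.vid A)).symm (D.vcomp_vid g).symm rfl
      (kap eta J)).symm.trans (heq_of_eq hθ₂e)
  -- θ₁ : J ⊙ g* ⇒ K
  obtain ⟨θ₁, hθ₁e, uθ₁⟩ := opk eps eta hc1 hc2 J K (D.vid A) (D.vid Dd)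
    (castC rfl (D.vid_vcomp (D.vid A)).symm (D.vcomp_vid g).symm rfl φ)
  have hθ₁ : HEq φ (D.vcompCell (kap eta J) θ₁) :=
    (castC_heq rfl (D.vid_vcomp (D.vid A)).symm (D.vcomp_vid g).symm rfl
      φ).symm.trans (heq_of_eq hθ₁e)
  -- θ₂ ∘ θ₁ = id
  have e1 : D.vid A = D.vcomp (D.vid A) (D.vcomp (D.vid A) (D.vid A)) := by
    rw [D.vid_vcomp, D.vid_vcomp]
  have e2 : g = D.vcomp g (D.vcomp (D.vid Dd) (D.vid Dd)) := by
    rw [D.vid_vcomp, D.vcomp_vid]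
  obtain ⟨θE, hθE, uθE⟩ := hφ K (D.vcomp (D.vid A) (D.vid A))
    (D.vcomp (D.vid Dd) (D.vid Dd)) (castC rfl e1 e2 rfl φ)
  have fact1 : castC rfl e1 e2 rfl φ = D.vcompCell φ (D.vcompCell θ₂ θ₁) := by
    refine (eq_of_heq ?_).symm
    have a1 : HEq (D.vcompCell φ (D.vcompCell θ₂ θ₁))
        (D.vcompCell (D.vcompCell φ θ₂) θ₁) := (D.vcompCell_assoc φ θ₂ θ₁).symm
    have a2 : HEq (D.vcompCell (D.vcompCell φ θ₂) θ₁)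
        (D.vcompCell (kap eta J) θ₁) := by
      refine vcc rfl rfl rfl ?_ ?_ rfl rfl hθ₂.symm HEq.rfl
      · rw [D.vid_vcomp]
      · rw [D.vcomp_vid]
    exact ((a1.trans a2).trans hθ₁.symm).trans (castC_heq rfl e1 e2 rfl φ).symm
  have fact2 : castC rfl e1 e2 rfl φ = D.vcompCell φ
      (castC rfl (D.vid_vcomp (D.vid A)).symm (D.vid_vcomp (D.vid Dd)).symm rfl
        (D.cid K)) := by
    refine (eq_of_heq ?_).symm
    have a1 : HEq (D.vcompCell φ
        (castC rfl (D.vid_vcomp (D.vid A)).symm (D.vid_vcomp (D.vid Dd)).symm rfl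
          (D.cid K))) (D.vcompCell φ (D.cid K)) := by
      refine vcc rfl rfl rfl rfl rfl (D.vid_vcomp (D.vid A))
        (D.vid_vcomp (D.vid Dd)) HEq.rfl
        (castC_heq rfl (D.vid_vcomp (D.vid A)).symm
          (D.vid_vcomp (D.vid Dd)).symm rfl (D.cid K))
    exact (a1.trans (D.vcompCell_cid φ)).trans (castC_heq rfl e1 e2 rfl φ).symm
  have hE : HEq (D.vcompCell θ₂ θ₁) (D.cid K) := by
    have := (uθE _ fact1).trans (uθE _ fact2).symm
    exact (heq_of_eq this).trans (castC_heq _ _ _ _ _)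
  -- the whiskered opcartesian cells
  have opΦ : ∀ {C : D.Obj} (H : D.Hor C A),
      D.IsOpcartesian (D.hcompCell (D.cid H) φ) :=
    fun H => opPhi eps eta φ θ₂ θ₁ hc1 hc2 hθ₂ hθ₁ hE H
  -- key computation
  have KC : ∀ {C : D.Obj} {H : D.Hor C A} {s : D.Ver C M}
      (φ'₀ : D.Cell H s r (D.hid M)),
      HEq (D.vcompCell (D.hcompCell (D.cid H) φ) (D.hcompCell φ'₀ ε))
        (D.hcompCell (castC rfl rfl (D.vid_vcomp r).symm rfl φ'₀)
          (D.vcompCell φ ε)) := by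
    intro C H s φ'₀
    refine (heq_of_eq (D.interchange (D.cid H) φ φ'₀ ε)).trans ?_
    refine hcc rfl rfl rfl rfl ?_ rfl rfl
      ((D.cid_vcompCell φ'₀).trans (castC_heq _ _ _ _ _).symm) HEq.rfl
    · rw [D.vid_vcomp]
  -- the core equivalence for each H
  have coreIff : ∀ {C : D.Obj} (H : D.Hor C A),
      (∀ (s : D.Ver C M) (χ : D.Cell (D.hcomp H K) s d (D.hid M)),
        ∃! φ' : D.Cell H s r (D.hid M), HEq χ (D.hcompCell φ' ε)) ↔
      (∀ (s : D.Ver C M) (ψ : D.Cell (D.hcomp H J) s (D.vcomp g d) (D.hid M)),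
        ∃! φ'' : D.Cell H s (D.vcomp (D.vid A) r) (D.hid M),
          HEq ψ (D.hcompCell φ'' (D.vcompCell φ ε))) := by
    intro C H
    constructor
    · intro hL s ψ
      obtain ⟨χ, hχ, uχ⟩ := opΦ H (D.hid M) s d
        (castC rfl (D.vid_vcomp s).symm rfl rfl ψ)
      obtain ⟨φ'₀, hφ'₀, uφ'₀⟩ := hL s χ
      refine ⟨castC rfl rfl (D.vid_vcomp r).symm rfl φ'₀, ?_, ?_⟩
      · have p3 : HEq (D.vcompCell (D.hcompCell (D.cid H) φ) χ)
            (D.vcompCell (D.hcompCell (D.cid H) φ) (D.hcompCell φ'₀ ε)) := by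
          refine vcc rfl rfl (D.hid_hcomp (D.hid M)).symm rfl rfl rfl rfl
            HEq.rfl hφ'₀
        exact (castC_heq rfl (D.vid_vcomp s).symm rfl rfl ψ).symm.trans
          ((heq_of_eq hχ).trans (p3.trans (KC φ'₀)))
      · intro φ''₂ hp
        have cceq : castC rfl rfl (D.vid_vcomp r).symm rfl
            (castC rfl rfl (D.vid_vcomp r) rfl φ''₂) = φ''₂ :=
          eq_of_heq ((castC_heq _ _ _ _ _).trans (castC_heq _ _ _ _ _))
        have q1 : HEq (D.vcompCell (D.hcompCell (D.cid H) φ)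
              (D.hcompCell (castC rfl rfl (D.vid_vcomp r) rfl φ''₂) ε))
            (D.hcompCell φ''₂ (D.vcompCell φ ε)) := by
          have := KC (castC rfl rfl (D.vid_vcomp r) rfl φ''₂)
          rwa [cceq] at this
        have q2 : castC rfl (D.vid_vcomp s).symm rfl rfl ψ
            = D.vcompCell (D.hcompCell (D.cid H) φ)
              (castC rfl rfl rfl (D.hid_hcomp (D.hid M))
                (D.hcompCell (castC rfl rfl (D.vid_vcomp r) rfl φ''₂) ε)) := by
          refine eq_of_heq ?_
          refine ((castC_heq _ _ _ _ ψ).trans (hp.trans q1.symm)).trans ?_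
          refine vcc rfl rfl (D.hid_hcomp (D.hid M)) rfl rfl rfl rfl HEq.rfl
            (castC_heq _ _ _ _ _).symm
        have q3 := uχ _ q2
        have q4 : HEq χ (D.hcompCell (castC rfl rfl (D.vid_vcomp r) rfl φ''₂) ε) :=
          (heq_of_eq q3.symm).trans (castC_heq _ _ _ _ _)
        have q5 := uφ'₀ _ q4
        refine eq_of_heq ?_
        exact ((castC_heq rfl rfl (D.vid_vcomp r) rfl φ''₂).symm.trans
          (heq_of_eq q5)).trans
          (castC_heq rfl rfl (D.vid_vcomp r).symm rfl φ'₀).symm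
    · intro hR s χ
      obtain ⟨φ'', hφ'', uφ''⟩ := hR s
        (castC rfl (D.vid_vcomp s) rfl rfl
          (D.vcompCell (D.hcompCell (D.cid H) φ) χ))
      have cceq : castC rfl rfl (D.vid_vcomp r).symm rfl
          (castC rfl rfl (D.vid_vcomp r) rfl φ'') = φ'' :=
        eq_of_heq ((castC_heq _ _ _ _ _).trans (castC_heq _ _ _ _ _))
      have q1 : HEq (D.vcompCell (D.hcompCell (D.cid H) φ)
            (D.hcompCell (castC rfl rfl (D.vid_vcomp r) rfl φ'') ε))
          (D.hcompCell φ'' (D.vcompCell φ ε)) := by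
        have := KC (castC rfl rfl (D.vid_vcomp r) rfl φ'')
        rwa [cceq] at this
      have q2 : D.vcompCell (D.hcompCell (D.cid H) φ) χ
          = D.vcompCell (D.hcompCell (D.cid H) φ)
            (castC rfl rfl rfl (D.hid_hcomp (D.hid M))
              (D.hcompCell (castC rfl rfl (D.vid_vcomp r) rfl φ'') ε)) := by
        refine eq_of_heq ?_
        refine ((castC_heq rfl (D.vid_vcomp s) rfl rfl _).symm.trans
          (hφ''.trans q1.symm)).trans ?_
        refine vcc rfl rfl (D.hid_hcomp (D.hid M)) rfl rfl rfl rfl HEq.rfl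
          (castC_heq _ _ _ _ _).symm
      obtain ⟨χu, hχu, uχu⟩ := opΦ H (D.hid M) s d
        (D.vcompCell (D.hcompCell (D.cid H) φ) χ)
      have r1 : χ = χu := uχu χ rfl
      have r2 := uχu _ q2
      have r3 : HEq χ (D.hcompCell (castC rfl rfl (D.vid_vcomp r) rfl φ'') ε) :=
        (heq_of_eq (r1.trans r2.symm)).trans (castC_heq _ _ _ _ _)
      refine ⟨castC rfl rfl (D.vid_vcomp r) rfl φ'', r3, ?_⟩
      intro φ'₂ hp2
      have s1 : HEq (castC rfl (D.vid_vcomp s) rfl rfl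
            (D.vcompCell (D.hcompCell (D.cid H) φ) χ))
          (D.hcompCell (castC rfl rfl (D.vid_vcomp r).symm rfl φ'₂)
            (D.vcompCell φ ε)) := by
        refine (castC_heq _ _ _ _ _).trans ?_
        refine (vcc rfl rfl (D.hid_hcomp (D.hid M)).symm rfl rfl rfl rfl
          HEq.rfl hp2).trans (KC φ'₂)
      have s2 := uφ'' _ s1
      refine eq_of_heq ?_
      exact ((castC_heq rfl rfl (D.vid_vcomp r).symm rfl φ'₂).symm.trans
        (heq_of_eq s2)).trans (castC_heq rfl rfl (D.vid_vcomp r) rfl φ'').symm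
  constructor
  · -- IsRan
    constructor
    · intro hRan
      intro s ψ
      have hcore := (coreIff (D.hid A)).mp (by
        intro s' χ
        have := hRan s' (DoubleCatAux.castC (D.hid_hcomp K) rfl rfl rfl χ)
        refine (existsUnique_congr fun φ' => ?_).mp this
        exact ⟨fun hh => ((DoubleCatAux.castC_heq (D.hid_hcomp K) rfl rfl rfl χ).symm).trans hh,
          fun hh => (DoubleCatAux.castC_heq (D.hid_hcomp K) rfl rfl rfl χ).trans hh⟩)
      have := hcore s (castC (D.hid_hcomp J).symm rfl rfl rfl ψ)
      refine (existsUnique_congr fun φ' => ?_).mp this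
      exact ⟨fun hh => ((castC_heq (D.hid_hcomp J).symm rfl rfl rfl ψ).symm).trans hh,
        fun hh => (castC_heq (D.hid_hcomp J).symm rfl rfl rfl ψ).trans hh⟩
    · intro hRan'
      intro s χ
      have hcore := (coreIff (D.hid A)).mpr (by
        intro s' ψ
        have := hRan' s' (DoubleCatAux.castC (D.hid_hcomp J) rfl rfl rfl ψ)
        refine (existsUnique_congr fun φ' => ?_).mp this
        exact ⟨fun hh => ((DoubleCatAux.castC_heq (D.hid_hcomp J) rfl rfl rfl ψ).symm).trans hh,
          fun hh => (DoubleCatAux.castC_heq (D.hid_hcomp J) rfl rfl rfl ψ).trans hh⟩)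
      have := hcore s (castC (D.hid_hcomp K).symm rfl rfl rfl χ)
      refine (existsUnique_congr fun φ' => ?_).mp this
      exact ⟨fun hh => ((castC_heq (D.hid_hcomp K).symm rfl rfl rfl χ).symm).trans hh,
        fun hh => (castC_heq (D.hid_hcomp K).symm rfl rfl rfl χ).trans hh⟩
  · -- IsPointwiseRan
    constructor
    · intro hp C H s ψ
      exact ((coreIff H).mp (fun s' χ => hp H s' χ)) s ψ
    · intro hp C H s χ
      exact ((coreIff H).mpr (fun s' ψ => hp H s' ψ)) s χ
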